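/- If x_{n+1} ≠ x_n, then u_n is a proper prefix of h_n. -/
import Mathlib


variable {A : Type*} [DecidableEq A]

/-- `psiW a` is the morphism with `ψ_a(a) = a` and `ψ_a(x) = ax` for `x ≠ a`. -/
def psiW (a : A) (w : List A) : List A :=
  w.flatMap (fun b => if b = a then [a] else [a, b])

/-- `muW x n = ψ_{x 1} ∘ ⋯ ∘ ψ_{x n}`. -/
def muW (x : ℕ → A) : ℕ → List A → List A
  | 0 => id
  | n + 1 => fun w => muW x n (psiW (x (n + 1)) w)

/-- `hW x n = μ_n (x_{n+1})`. -/
def hW (x : ℕ → A) (n : ℕ) : List A := muW x n [x (n + 1)]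

/-- `p` is the palindromic right-closure of `w`: the shortest palindrome having `w`
as a prefix. -/
def IsPalClosure (w p : List A) : Prop :=
  w <+: p ∧ p.reverse = p ∧
    ∀ q : List A, w <+: q → q.reverse = q → p.length ≤ q.length

/-- The finite word `w` is a prefix of the infinite word `s`. -/
def PrefInf (w : List A) (s : ℕ → A) : Prop :=
  ∀ i : ℕ, ∀ h : i < w.length, w[i] = s i

/-- Number of occurrences (positions) of `w` as a factor of `v`. -/
def occ (w v : List A) : ℕ :=
  (List.range (v.length + 1)).countP
    (fun i => decide (i + w.length ≤ v.length ∧ (v.drop i).take w.length = w))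

/-- `cat z k = z 1 ++ z 2 ++ ⋯ ++ z k`. -/
def cat (z : ℕ → List A) (k : ℕ) : List A := ((List.range' 1 k).map z).flatten

/-- `z` is the Ziv-Lempel factorization of the infinite word `s`: each `z m` is
the shortest prefix of `z m · z (m+1) ⋯` occurring only once in `z 1 ⋯ z m`. -/
def IsZFact (s : ℕ → A) (z : ℕ → List A) : Prop :=
  ∀ m : ℕ, 1 ≤ m → z m ≠ [] ∧ PrefInf (cat z m) s ∧
    occ (z m) (cat z m) = 1 ∧
    ∀ p : List A, p <+: z m → p ≠ z m → 2 ≤ occ p (cat z m)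

/-- `c` is the Crochemore factorization of the infinite word `s`: each `c m` is
either a fresh letter, or the longest prefix of `c m · c (m+1) ⋯` occurring
twice in `c 1 ⋯ c m`. -/
def IsCFact (s : ℕ → A) (c : ℕ → List A) : Prop :=
  ∀ m : ℕ, 1 ≤ m → c m ≠ [] ∧ PrefInf (cat c m) s ∧
    ((∃ a : A, c m = [a] ∧ a ∉ cat c (m - 1)) ∨
      (2 ≤ occ (c m) (cat c m) ∧
        occ (c m ++ [s (cat c m).length]) (cat c m ++ [s (cat c m).length]) = 1))


namespace UProofAux

set_option linter.unusedSectionVars false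


theorem psiW_nil (a : A) : psiW a [] = [] := rfl

theorem psiW_cons (a b : A) (l : List A) :
    psiW a (b :: l) = (if b = a then [a] else [a, b]) ++ psiW a l := rfl

theorem psiW_append (a : A) (u v : List A) :
    psiW a (u ++ v) = psiW a u ++ psiW a v := by
  simp [psiW]

theorem psiW_head (a : A) (l : List A) : psiW a l = [] ∨ ∃ t, psiW a l = a :: t := by
  cases l with
  | nil => exact Or.inl rfl
  | cons b l =>
    right
    rw [psiW_cons]
    by_cases h : b = a <;> simp [h]

theorem psiW_ne_nil (a : A) (l : List A) (h : l ≠ []) : psiW a l ≠ [] := by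
  cases l with
  | nil => simp at h
  | cons b l => rw [psiW_cons]; by_cases hb : b = a <;> simp [hb]

theorem psiW_prefix (a : A) {u v : List A} (h : u <+: v) : psiW a u <+: psiW a v := by
  obtain ⟨t, rfl⟩ := h
  rw [psiW_append]
  exact List.prefix_append _ _

theorem psiW_suffix (a : A) {u v : List A} (h : u <:+ v) : psiW a u <:+ psiW a v := by
  obtain ⟨t, rfl⟩ := h
  rw [psiW_append]
  exact List.suffix_append _ _

theorem psiW_length_reverse (a : A) (l : List A) :
    (psiW a l.reverse).length = (psiW a l).length := by
  induction l with
  | nil => rfl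
  | cons b l ih =>
    simp only [List.reverse_cons, psiW_append, psiW_cons, psiW_nil, List.append_nil,
      List.length_append, ih]
    omega

theorem psiW_rev (a : A) (l : List A) :
    a :: (psiW a l).reverse = psiW a l.reverse ++ [a] := by
  induction l with
  | nil => rfl
  | cons b l ih =>
    have h1 : ∀ (Y : List A), a :: ((psiW a l).reverse ++ Y) = (psiW a l.reverse ++ [a]) ++ Y := by
      intro Y
      rw [← ih]
      rfl
    rw [psiW_cons, List.reverse_append, List.reverse_cons, psiW_append, h1]
    by_cases hb : b = a <;> simp [hb, psiW_cons, psiW_nil]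

theorem psiW_inj (a : A) : ∀ {l1 l2 : List A}, psiW a l1 = psiW a l2 → l1 = l2 := by
  intro l1
  induction l1 with
  | nil =>
    intro l2 h
    cases l2 with
    | nil => rfl
    | cons b l2 =>
      rw [psiW_nil, psiW_cons] at h
      by_cases hb : b = a <;> simp [hb] at h
  | cons b l1 ih =>
    intro l2 h
    cases l2 with
    | nil =>
      rw [psiW_nil, psiW_cons] at h
      by_cases hb : b = a <;> simp [hb] at h
    | cons c l2 =>
      rw [psiW_cons, psiW_cons] at h
      by_cases hb : b = a <;> by_cases hc : c = a
      · rw [if_pos hb, if_pos hc] at h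
        simp only [List.nil_append, List.singleton_append, List.cons.injEq, true_and] at h
        rw [hb, hc, ih h]
      · rw [if_pos hb, if_neg hc] at h
        simp only [List.nil_append, List.singleton_append, List.cons_append, List.cons.injEq, true_and] at h
        rcases psiW_head a l1 with h0 | ⟨t, h0⟩ <;> rw [h0] at h
        · simp at h
        · simp only [List.cons.injEq] at h
          exact absurd h.1.symm hc
      · rw [if_neg hb, if_pos hc] at h
        simp only [List.nil_append, List.singleton_append, List.cons_append, List.cons.injEq, true_and] at h
        rcases psiW_head a l2 with h0 | ⟨t, h0⟩ <;> rw [h0] at h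
        · simp at h
        · simp only [List.cons.injEq] at h
          exact absurd h.1 hb
      · rw [if_neg hb, if_neg hc] at h
        simp only [List.cons_append, List.cons.injEq, true_and] at h
        rw [h.1, ih h.2]

def muX : List A → List A → List A
  | [], w => w
  | a :: s, w => psiW a (muX s w)

def PalX : List A → List A
  | [] => []
  | a :: s => psiW a (PalX s) ++ [a]

theorem muX_nil (w : List A) : muX [] w = w := rfl
theorem muX_cons (a : A) (s : List A) (w : List A) : muX (a :: s) w = psiW a (muX s w) := rfl

theorem muX_append_dir (s : List A) (b : A) (w : List A) :
    muX (s ++ [b]) w = muX s (psiW b w) := by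
  induction s with
  | nil => rfl
  | cons a s ih => rw [List.cons_append, muX_cons, ih, muX_cons]

theorem muX_append_word (s : List A) (u v : List A) :
    muX s (u ++ v) = muX s u ++ muX s v := by
  induction s with
  | nil => rfl
  | cons a s ih => rw [muX_cons, ih, psiW_append, muX_cons, muX_cons]

theorem muX_ne_nil (s : List A) (w : List A) (h : w ≠ []) : muX s w ≠ [] := by
  induction s with
  | nil => exact h
  | cons a s ih => exact psiW_ne_nil a _ ih

/-- Justin-type identity. -/
theorem palX_append (s : List A) (c : A) :
    PalX (s ++ [c]) = muX s [c] ++ PalX s := by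
  induction s with
  | nil => rfl
  | cons a s ih =>
    show psiW a (PalX (s ++ [c])) ++ [a] = psiW a (muX s [c]) ++ (psiW a (PalX s) ++ [a])
    rw [ih, psiW_append, List.append_assoc]

theorem pal_psiW {a : A} {w : List A} (h : w.reverse = w) :
    (psiW a w ++ [a]).reverse = psiW a w ++ [a] := by
  rw [List.reverse_append, List.reverse_cons, List.reverse_nil, List.nil_append,
    List.singleton_append, psiW_rev, h]

theorem pal_psiW_iff {a : A} {w : List A} (h : (psiW a w ++ [a]).reverse = psiW a w ++ [a]) :
    w.reverse = w := by
  rw [List.reverse_append, List.reverse_cons, List.reverse_nil, List.nil_append,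
    List.singleton_append, psiW_rev] at h
  have := List.append_inj_left' h rfl
  exact psiW_inj a this

theorem palX_palindrome (s : List A) : (PalX s).reverse = PalX (A := A) s := by
  induction s with
  | nil => rfl
  | cons a s ih => exact pal_psiW ih

/-- prefix truncation -/
theorem prefix_trunc {l u v : List A} (h : l <+: u ++ v) (hl : l.length ≤ u.length) :
    l <+: u := by
  have h1 : l = (u ++ v).take l.length := (List.prefix_iff_eq_take.mp h)
  rw [List.take_append_of_le_length hl] at h1
  rw [h1]
  exact List.take_prefix _ _

theorem suffix_of_suffix_le {p q l : List A} (hp : p <:+ l) (hq : q <:+ l)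
    (h : p.length ≤ q.length) : p <:+ q := by
  rw [← List.reverse_prefix] at hp hq ⊢
  exact List.prefix_of_prefix_length_le hp hq (by simpa)

theorem suffix_eq_drop {s V : List A} (h : s <:+ V) : s = V.drop (V.length - s.length) := by
  obtain ⟨t, rfl⟩ := h
  simp

/-- candidate palindrome built from a palindromic suffix -/
theorem candidate_pal {s V : List A} (hs : s <:+ V) (hpal : s.reverse = s) :
    (V ++ (V.take (V.length - s.length)).reverse).reverse
      = V ++ (V.take (V.length - s.length)).reverse := by
  obtain ⟨t, rfl⟩ := hs
  have ht : ((t ++ s).take ((t ++ s).length - s.length)) = t := by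
    simp [List.take_append_of_le_length]
  rw [ht, List.reverse_append, List.reverse_reverse, List.append_assoc, List.reverse_append, hpal]

/-- the overlap lemma: a palindrome extending `W` induces a palindromic suffix of `W`. -/
theorem overlap_pal {W R : List A} (hR : R.reverse = R) (hWR : W <+: R)
    (hlen : R.length < 2 * W.length) :
    (W.drop (R.length - W.length)).reverse = W.drop (R.length - W.length) := by
  have hWle : W.length ≤ R.length := hWR.length_le
  set d := R.length - W.length with hd
  have hdW : d < W.length := by omega
  have hplen : (W.drop d).length = W.length - d := by simp
  have hRW : ∀ i (h : i < W.length), W[i] = R[i]'(by omega) := by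
    intro i h
    exact List.IsPrefix.getElem hWR _
  have hRpal : ∀ i (h : i < R.length), R[i] = R[R.length - 1 - i]'(by omega) := by
    intro i h
    have h1 : R.reverse[i]? = R[i]? := by rw [hR]
    rw [List.getElem?_reverse h, List.getElem?_eq_getElem (by omega), List.getElem?_eq_getElem h]
      at h1
    exact (Option.some_injective _ h1).symm
  apply List.ext_getElem (by simp)
  intro i h1 h2
  rw [List.getElem_reverse]
  rw [List.getElem_drop, List.getElem_drop]
  have hi : i < W.length - d := by simpa [hplen] using h2
  have e1 : ∀ j (h : j < W.length), W[j] = R[R.length - 1 - j]'(by omega) := by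
    intro j hj
    rw [hRW j hj, hRpal j (by omega)]
  rw [e1 (d + ((W.drop d).length - 1 - i)) (by omega), hRW (d + i) (by omega)]
  congr 1
  omega

theorem closure_le {w p : List A} (h : IsPalClosure w p) : p.length ≤ 2 * w.length := by
  have := h.2.2 (w ++ w.reverse) (List.prefix_append _ _) (by simp)
  simpa [two_mul] using this

theorem closure_structure {w p : List A} (h : IsPalClosure w p) :
    p = w ++ (w.take (p.length - w.length)).reverse := by
  obtain ⟨⟨t, rfl⟩, hpal, _⟩ := h
  have hle : t.length ≤ w.length := by
    have := closure_le ⟨⟨t, rfl⟩, hpal, ‹_›⟩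
    simp only [List.length_append] at this ⊢
    omega
  have hK : (w ++ t).length - w.length = t.length := by simp
  rw [hK]
  congr 1
  have h1 : t.reverse = (w ++ t).take t.length := by
    rw [← hpal, List.reverse_append, List.take_append_of_le_length (by simp)]
    simp
  rw [List.take_append_of_le_length hle] at h1
  rw [← h1, List.reverse_reverse]

theorem closure_unique {w p q : List A} (hp : IsPalClosure w p) (hq : IsPalClosure w q) :
    p = q := by
  have h1 : p.length = q.length :=
    le_antisymm (hp.2.2 q hq.1 hq.2.1) (hq.2.2 p hp.1 hp.2.1)
  rw [closure_structure hp, closure_structure hq, h1]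
theorem suffix_split {p X Y : List A} (h : p <:+ X ++ Y) (hl : Y.length < p.length) :
    ∃ t, t <:+ X ∧ t ≠ [] ∧ p = t ++ Y := by
  obtain ⟨pre, hpre⟩ := h
  have hlen : pre.length + p.length = X.length + Y.length := by
    have := congrArg List.length hpre
    simpa using this
  have hpreX : pre.length < X.length := by omega
  refine ⟨X.drop pre.length, List.drop_suffix _ _, ?_, ?_⟩
  · intro h0
    have := congrArg List.length h0
    simp at this
    omega
  · have h1 : p = (X ++ Y).drop pre.length := by
      rw [← hpre]
      simp
    rw [h1, List.drop_append_of_le_length (by omega)]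

theorem suffix_singleton {t : List A} {y : A} (h : t <:+ [y]) (hne : t ≠ []) : t = [y] := by
  obtain ⟨pre, hpre⟩ := h
  cases pre with
  | nil => simpa using hpre
  | cons z zs =>
    exfalso
    simp only [List.cons_append, List.cons.injEq] at hpre
    exact hne (List.append_eq_nil_iff.mp hpre.2).2

theorem suffix_pair {t : List A} {y z : A} (h : t <:+ [y, z]) (hne : t ≠ []) :
    t = [z] ∨ t = [y, z] := by
  have hd := suffix_eq_drop h
  have hl : t.length ≤ 2 := by simpa using h.length_le
  have hl1 : 1 ≤ t.length := by
    cases t with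
    | nil => simp at hne
    | cons _ _ => simp
  have : t.length = 1 ∨ t.length = 2 := by omega
  rcases this with h1 | h1 <;> rw [h1] at hd <;> simp at hd
  · left; rw [hd]
  · right; rw [hd]

theorem suffix_corr_eq (a : A) : ∀ (V p : List A), p <:+ (psiW a V ++ [a]) →
    p.reverse = p → p ≠ [] →
    ∃ t, t <:+ V ∧ t.reverse = t ∧ p.length = (psiW a t).length + 1 := by
  intro V
  induction V with
  | nil =>
    intro p hsuf hpal hne
    rw [psiW_nil, List.nil_append] at hsuf
    refine ⟨[], by simp, by simp, ?_⟩
    rw [suffix_singleton hsuf hne]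
    simp [psiW_nil]
  | cons b V ih =>
    intro p hsuf hpal hne
    rw [psiW_cons, List.append_assoc] at hsuf
    by_cases hlen : p.length ≤ (psiW a V ++ [a]).length
    · have hsuf2 : p <:+ psiW a V ++ [a] :=
        suffix_of_suffix_le hsuf (List.suffix_append _ _) hlen
      obtain ⟨t, h1, h2, h3⟩ := ih p hsuf2 hpal hne
      exact ⟨t, h1.trans (List.suffix_cons _ _), h2, h3⟩
    · obtain ⟨t, ht, htne, rfl⟩ := suffix_split hsuf (by omega)
      by_cases hb : b = a
      · rw [if_pos hb] at ht
        obtain rfl := suffix_singleton ht htne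
        have hp : [a] ++ (psiW a V ++ [a]) = psiW a (b :: V) ++ [a] := by
          rw [psiW_cons, if_pos hb, List.append_assoc]
        rw [hp] at hpal ⊢
        refine ⟨b :: V, List.suffix_refl _, ?_, by simp⟩
        have := pal_psiW_iff hpal
        rw [hb]
        rw [hb] at this
        exact this
      · rw [if_neg hb] at ht
        rcases suffix_pair ht htne with rfl | rfl
        · -- t = [b] : p = b :: (psiW a V ++ [a]) palindrome, head b ≠ a = last : contra
          exfalso
          have hrev : ([b] ++ (psiW a V ++ [a])).reverse
              = a :: ((psiW a V).reverse ++ [b]) := by simp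
          rw [hrev] at hpal
          have : a = b := by
            have := congrArg (fun l => l.head?) hpal
            simpa using this
          exact hb this.symm
        · -- t = [a, b] : p = psiW a (b :: V) ++ [a]
          have hp : [a, b] ++ (psiW a V ++ [a]) = psiW a (b :: V) ++ [a] := by
            rw [psiW_cons, if_neg hb, List.append_assoc]
          rw [hp] at hpal ⊢
          exact ⟨b :: V, List.suffix_refl _, pal_psiW_iff hpal, by simp⟩
theorem suffix_corr_ne (a c : A) (hca : c ≠ a) : ∀ (V₀ p : List A),
    p <:+ psiW a (V₀ ++ [c]) → p.reverse = p → p ≠ [] →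
    ∃ s, s <:+ V₀ ++ [c] ∧ s.reverse = s ∧ s ≠ [] ∧ p.length + 1 = (psiW a s).length := by
  intro V₀
  induction V₀ with
  | nil =>
    intro p hsuf hpal hne
    rw [List.nil_append, psiW_cons, if_neg hca, psiW_nil, List.append_nil] at hsuf
    refine ⟨[c], List.suffix_refl _, by simp, by simp, ?_⟩
    rcases suffix_pair hsuf hne with rfl | rfl
    · simp [psiW_cons, if_neg hca, psiW_nil]
    · exfalso
      have : c = a := by
        have := congrArg (fun l => l.head?) hpal
        simpa using this
      exact hca this
  | cons b V₁ ih =>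
    intro p hsuf hpal hne
    rw [List.cons_append, psiW_cons] at hsuf
    by_cases hlen : p.length ≤ (psiW a (V₁ ++ [c])).length
    · have hsuf2 : p <:+ psiW a (V₁ ++ [c]) :=
        suffix_of_suffix_le hsuf (List.suffix_append _ _) hlen
      obtain ⟨s, h1, h2, h3, h4⟩ := ih p hsuf2 hpal hne
      exact ⟨s, h1.trans ((V₁ ++ [c]).suffix_cons b), h2, h3, h4⟩
    · obtain ⟨t, ht, htne, rfl⟩ := suffix_split hsuf (by omega)
      have hpsiV : psiW a (V₁ ++ [c]) = psiW a V₁ ++ [a, c] := by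
        rw [psiW_append, psiW_cons, if_neg hca, psiW_nil, List.append_nil]
      by_cases hb : b = a
      · -- t = [a], p = a :: ψ(V₁ ++ [c]) : head a, last c : contra
        exfalso
        rw [if_pos hb] at ht
        obtain rfl := suffix_singleton ht htne
        rw [hpsiV] at hpal
        have : c = a := by
          have h0 : ([a] ++ (psiW a V₁ ++ [a, c])).reverse
              = c :: (a :: (psiW a V₁).reverse ++ [a]) := by simp
          rw [h0] at hpal
          have := congrArg (fun l => l.head?) hpal
          simpa using this
        exact hca this
      · rw [if_neg hb] at ht
        rcases suffix_pair ht htne with rfl | rfl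
        · -- t = [b] : p = b :: ψ(V₁ ++ [c]); pal forces b = c and V₁ palindrome
          rw [hpsiV] at hpal ⊢
          have h0 : ([b] ++ (psiW a V₁ ++ [a, c])).reverse
              = c :: ([a] ++ ((psiW a V₁).reverse ++ [b])) := by simp
          rw [h0] at hpal
          have hpal2 : c = b ∧ [a] ++ ((psiW a V₁).reverse ++ [b])
              = psiW a V₁ ++ [a, c] := by
            have h1 : ([b] ++ (psiW a V₁ ++ [a, c])) = b :: (psiW a V₁ ++ [a, c]) := by simp
            rw [h1, List.cons.injEq] at hpal
            exact hpal
        -- from tail equality derive V₁ palindrome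
          obtain ⟨rfl, htail⟩ := hpal2
          have e1 : psiW a V₁.reverse ++ [a] = psiW a V₁ ++ [a] := by
            have h2 : (a :: (psiW a V₁).reverse) ++ [c] = (psiW a V₁ ++ [a]) ++ [c] := by
              simp only [List.cons_append, List.append_assoc, List.singleton_append,
                List.nil_append]
              simpa using htail
            have h3 := List.append_inj_left' h2 rfl
            rw [← psiW_rev]
            exact h3
          have hV₁ : V₁.reverse = V₁ := psiW_inj a (List.append_inj_left' e1 rfl)
          refine ⟨c :: (V₁ ++ [c]), ?_, by simp [hV₁], by simp, ?_⟩
          · exact List.suffix_refl _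
          · simp [psiW_cons, if_neg hca, psiW_append, psiW_nil]
        · -- t = [a, b] : p = ψ(b :: (V₁ ++ [c])) : head a, last c : contra
          exfalso
          rw [hpsiV] at hpal
          have h0 : ([a, b] ++ (psiW a V₁ ++ [a, c])).reverse
              = c :: ((a :: (psiW a V₁).reverse) ++ [b, a]) := by simp
          rw [h0] at hpal
          have : c = a := by
            have := congrArg (fun l => l.head?) hpal
            simpa using this
          exact hca this
theorem take_psiW_mono (a : A) (V : List A) {k k' : ℕ} (h : k ≤ k') :
    (psiW a (V.take k)).length ≤ (psiW a (V.take k')).length := by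
  have h1 : V.take k <+: V.take k' := by
    have h2 : (V.take k').take k = V.take k := by
      rw [List.take_take, Nat.min_eq_left h]
    rw [← h2]
    exact List.take_prefix _ _
  exact (psiW_prefix a h1).length_le

theorem palX_closure (s : List A) (c : A) :
    IsPalClosure (PalX s ++ [c]) (PalX (s ++ [c])) := by
  induction s with
  | nil =>
    refine ⟨List.prefix_refl _, by simp [PalX, psiW_nil], fun q hq _ => ?_⟩
    have := hq.length_le
    simpa [PalX, psiW_nil] using this
  | cons a s' IH =>
    set P := PalX s' with hP
    set V := P ++ [c] with hV
    set Q := PalX (s' ++ [c]) with hQdef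
    have hPpal : P.reverse = P := palX_palindrome s'
    have hQpal : Q.reverse = Q := IH.2.1
    have hVQ : V <+: Q := IH.1
    have hVQlen : V.length ≤ Q.length := hVQ.length_le
    have hQle : Q.length ≤ 2 * V.length := closure_le IH
    set K := Q.length - V.length with hK
    have hQstruct : Q = V ++ (V.take K).reverse := closure_structure IH
    have hKle : K ≤ V.length := by
      simp only [hK]
      omega
    -- the word and its closure candidate
    have hw_eq : PalX (a :: s') ++ [c] = (psiW a P ++ [a]) ++ [c] := rfl
    have hZ_eq : PalX ((a :: s') ++ [c]) = psiW a Q ++ [a] := rfl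
    -- length of psiW a Q
    have hpsiQlen : (psiW a Q).length = (psiW a V).length + (psiW a (V.take K)).length := by
      conv_lhs => rw [hQstruct]
      rw [psiW_append, List.length_append, psiW_length_reverse]
    -- the key bound
    have key : ∀ s0 : List A, s0 <:+ V → s0.reverse = s0 →
        (psiW a Q).length + (psiW a s0).length ≤ 2 * (psiW a V).length := by
      intro s0 hs0 hs0pal
      have hs0len : s0.length ≤ V.length := hs0.length_le
      have hcand := IH.2.2 (V ++ (V.take (V.length - s0.length)).reverse)
        (List.prefix_append _ _) (candidate_pal hs0 hs0pal)
      have hcandlen : (V ++ (V.take (V.length - s0.length)).reverse).length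
          = V.length + (V.length - s0.length) := by
        simp only [List.length_append, List.length_reverse, List.length_take]
        omega
      have hKb : K ≤ V.length - s0.length := by
        rw [hcandlen] at hcand
        omega
      have hsplit : V.take (V.length - s0.length) ++ s0 = V := by
        conv_rhs => rw [← List.take_append_drop (V.length - s0.length) V]
        congr 1
        exact suffix_eq_drop hs0
      have hsplitlen : (psiW a (V.take (V.length - s0.length))).length
          + (psiW a s0).length = (psiW a V).length := by
        conv_rhs => rw [← hsplit]
        simp [psiW_append]
      have hmono := take_psiW_mono a V hKb
      omega
    refine ⟨?_, ?_, ?_⟩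
    · -- prefix
      rw [hw_eq, hZ_eq]
      by_cases hc : c = a
      · -- w = psiW a V ++ [a]
        have hwV : (psiW a P ++ [a]) ++ [c] = psiW a V ++ [a] := by
          rw [hV, psiW_append, psiW_cons, psiW_nil, if_pos hc, hc, List.append_nil]
        rw [hwV]
        obtain ⟨tQ, htQ⟩ := hVQ
        rcases psiW_head a tQ with h0 | ⟨rest, h0⟩
        · have : psiW a Q = psiW a V := by
            rw [← htQ, psiW_append, h0, List.append_nil]
          rw [this]
        · refine ⟨rest ++ [a], ?_⟩
          have hQsplit : psiW a Q = psiW a V ++ psiW a tQ := by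
            rw [← htQ, psiW_append]
          rw [hQsplit, h0]
          simp
      · have hwV : (psiW a P ++ [a]) ++ [c] = psiW a V := by
          rw [hV, psiW_append, psiW_cons, psiW_nil, if_neg hc, List.append_nil]
          simp
        rw [hwV]
        exact (psiW_prefix a hVQ).trans (List.prefix_append _ _)
    · rw [hZ_eq]
      exact pal_psiW hQpal
    · -- minimality
      intro R hwR hRpal
      rw [hZ_eq, List.length_append, List.length_cons, List.length_nil]
      rw [hw_eq] at hwR
      have hwRlen := hwR.length_le
      by_cases hc : c = a
      · have hwV : (psiW a P ++ [a]) ++ [c] = psiW a V ++ [a] := by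
          rw [hV, psiW_append, psiW_cons, psiW_nil, if_pos hc, hc, List.append_nil]
        rw [hwV] at hwR hwRlen
        have hwlen : (psiW a V ++ [a]).length = (psiW a V).length + 1 := by simp
        by_cases hbig : 2 * (psiW a V ++ [a]).length ≤ R.length
        · have h1 := key [] (by simp) (by simp)
          rw [psiW_nil] at h1
          simp only [List.length_nil] at h1
          omega
        · have hover := overlap_pal hRpal hwR (by omega)
          set p := (psiW a V ++ [a]).drop (R.length - (psiW a V ++ [a]).length) with hp
          have hplen : p.length = 2 * (psiW a V ++ [a]).length - R.length := by
            rw [hp, List.length_drop]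
            omega
          have hpne : p ≠ [] := by
            intro h0
            rw [h0] at hplen
            simp at hplen
            omega
          obtain ⟨t, ht1, ht2, ht3⟩ := suffix_corr_eq a V p (List.drop_suffix _ _) hover hpne
          have h1 := key t ht1 ht2
          omega
      · have hwV : (psiW a P ++ [a]) ++ [c] = psiW a V := by
          rw [hV, psiW_append, psiW_cons, psiW_nil, if_neg hc, List.append_nil]
          simp
        rw [hwV] at hwR hwRlen
        by_cases hbig : 2 * (psiW a V).length ≤ R.length
        · have h1 := key [c] (by rw [hV]; exact List.suffix_append _ _) (by simp)
          have h2 : (psiW a [c]).length = 2 := by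
            rw [psiW_cons, if_neg hc, psiW_nil, List.append_nil]
            simp
          rw [h2] at h1
          omega
        · have hover := overlap_pal hRpal hwR (by omega)
          set p := (psiW a V).drop (R.length - (psiW a V).length) with hp
          have hplen : p.length = 2 * (psiW a V).length - R.length := by
            rw [hp, List.length_drop]
            omega
          have hpne : p ≠ [] := by
            intro h0
            rw [h0] at hplen
            simp at hplen
            omega
          have hpsuf : p <:+ psiW a (P ++ [c]) := by
            rw [← hV]
            exact List.drop_suffix _ _
          obtain ⟨t, ht1, ht2, ht3, ht4⟩ := suffix_corr_ne a c hc P p hpsuf hover hpne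
          have h1 := key t (by rw [hV]; exact ht1) ht2
          omega
theorem prefix_append_left (X : List A) {l₁ l₂ : List A} (h : l₁ <+: l₂) :
    X ++ l₁ <+: X ++ l₂ := by
  obtain ⟨t, rfl⟩ := h
  exact ⟨t, by simp⟩

theorem prefix_append_left_cancel {X l₁ l₂ : List A} (h : X ++ l₁ <+: X ++ l₂) :
    l₁ <+: l₂ := by
  obtain ⟨t, ht⟩ := h
  rw [List.append_assoc] at ht
  exact ⟨t, List.append_cancel_left ht⟩

theorem palX_prefix_mu (s : List A) : ∀ b : A, PalX s ++ [b] <+: muX s [b] ++ PalX s := by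
  induction s using List.reverseRecOn with
  | nil => intro b; exact List.prefix_refl _ |>.trans (List.prefix_append _ _)
  | append_singleton s' c IH =>
    intro b
    rw [palX_append, muX_append_dir]
    by_cases hb : b = c
    · have hblock : psiW c [b] = [c] := by
        rw [psiW_cons, if_pos hb, psiW_nil, List.append_nil]
      rw [hblock, List.append_assoc]
      subst hb
      exact prefix_append_left _ (IH b)
    · have hblock : psiW c [b] = [c] ++ [b] := by
        rw [psiW_cons, if_neg hb, psiW_nil, List.append_nil]
        rfl
      rw [hblock, muX_append_word, List.append_assoc]
      set P' := PalX s'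
      set Acat := muX s' [c]
      set B := muX s' [b]
      have IHb : P' ++ [b] <+: B ++ P' := IH b
      have hPA : P' <+: Acat ++ P' := (List.prefix_append _ _).trans (IH c)
      have main : P' ++ [b] <+: B ++ (Acat ++ P') := by
        by_cases hlen : P'.length + 1 ≤ B.length
        · have h1 : P' ++ [b] <+: B := prefix_trunc IHb (by simpa using hlen)
          exact h1.trans (List.prefix_append _ _)
        · have hBpre : B <+: P' ++ [b] :=
            List.prefix_of_prefix_length_le (List.prefix_append _ _) IHb
              (by simp; omega)
          obtain ⟨t, htB⟩ := hBpre
          have ht : t <+: P' := by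
            apply prefix_append_left_cancel (X := B)
            rw [htB]
            exact IHb
          obtain ⟨r2, hr2⟩ := ht.trans hPA
          exact ⟨r2, by rw [← htB, List.append_assoc, hr2]⟩
      rw [List.append_assoc Acat B]
      exact prefix_append_left _ main
    
theorem palX_short (s : List A) : ∀ c b : A, b ≠ c →
    (PalX s).length < (muX s [c]).length + (muX s [b]).length := by
  induction s using List.reverseRecOn with
  | nil =>
    intro c b h
    simp [PalX, muX]
  | append_singleton s' d IH =>
    intro c b hbc
    have hblock : ∀ e : A, psiW d [e] = if e = d then [d] else [d] ++ [e] := by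
      intro e
      by_cases he : e = d <;> simp [psiW_cons, he, psiW_nil]
    rw [palX_append, List.length_append, muX_append_dir, muX_append_dir, hblock c, hblock b]
    by_cases hc : c = d <;> by_cases hb : b = d
    · exact absurd (hb.trans hc.symm) hbc
    · rw [if_pos hc, if_neg hb, muX_append_word, List.length_append]
      have := IH d b hb
      omega
    · rw [if_neg hc, if_pos hb, muX_append_word, List.length_append]
      have := IH d c hc
      omega
    · rw [if_neg hc, if_neg hb, muX_append_word, muX_append_word,
        List.length_append, List.length_append]
      have := IH c b hbc
      omega

def dirList (x : ℕ → A) (n : ℕ) : List A := (List.range' 1 n).map x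

theorem dirList_succ (x : ℕ → A) (n : ℕ) :
    dirList x (n + 1) = dirList x n ++ [x (n + 1)] := by
  unfold dirList
  rw [List.range'_concat, List.map_append]
  simp [Nat.add_comm]

theorem muW_eq (x : ℕ → A) : ∀ (n : ℕ) (w : List A), muW x n w = muX (dirList x n) w := by
  intro n
  induction n with
  | zero => intro w; rfl
  | succ n ih =>
    intro w
    show muW x n (psiW (x (n + 1)) w) = _
    rw [ih, ← muX_append_dir, ← dirList_succ]

theorem u_eq (x : ℕ → A) (u : ℕ → List A) (hu1 : u 1 = [])
    (hu : ∀ n : ℕ, 1 ≤ n → IsPalClosure (u n ++ [x n]) (u (n + 1))) :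
    ∀ n : ℕ, u (n + 1) = PalX (dirList x n) := by
  intro n
  induction n with
  | zero => simpa [dirList, PalX] using hu1
  | succ n ih =>
    have h1 := hu (n + 1) (by omega)
    rw [ih] at h1
    have h2 := palX_closure (dirList x n) (x (n + 1))
    rw [dirList_succ]
    exact closure_unique h1 h2

end UProofAux

open UProofAux in
theorem u_proper_prefix_h (x : ℕ → A) (u : ℕ → List A) (hu1 : u 1 = [])
    (hu : ∀ n : ℕ, 1 ≤ n → IsPalClosure (u n ++ [x n]) (u (n + 1))) (n : ℕ) (hn : 1 ≤ n) (hne : x (n + 1) ≠ x n) :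
    u n <+: hW x n ∧ u n ≠ hW x n := by
  obtain ⟨k, rfl⟩ : ∃ k, n = k + 1 := ⟨n - 1, by omega⟩
  have hueq : u (k + 1) = PalX (dirList x k) := u_eq x u hu1 hu k
  set s := dirList x k with hs
  set cl := x (k + 1) with hcl
  set b := x (k + 2) with hb
  have hne' : b ≠ cl := hne
  have hblock : psiW cl [b] = [cl] ++ [b] := by
    rw [psiW_cons, if_neg hne', psiW_nil, List.append_nil]
    rfl
  have hmu : hW x (k + 1) = muX s [cl] ++ muX s [b] := by
    show muW x (k + 1) [x (k + 2)] = _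
    rw [muW_eq, dirList_succ, muX_append_dir, ← hcl, ← hb, ← hs, hblock, muX_append_word]
  have hlen : (PalX s).length < (hW x (k + 1)).length := by
    rw [hmu, List.length_append]
    exact palX_short s cl b hne'
  have hpref : PalX s <+: hW x (k + 1) := by
    have h1 : PalX s <+: PalX (s ++ [cl]) := by
      rw [palX_append]
      exact (List.prefix_append _ _).trans (palX_prefix_mu s cl)
    have h2 : PalX (s ++ [cl]) <+: muX (s ++ [cl]) [b] ++ PalX (s ++ [cl]) :=
      (List.prefix_append _ _).trans (palX_prefix_mu (s ++ [cl]) b)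
    have hmu2 : muX (s ++ [cl]) [b] = hW x (k + 1) := by
      rw [hmu, muX_append_dir, hblock, muX_append_word]
    rw [hmu2] at h2
    exact prefix_trunc (h1.trans h2) (le_of_lt hlen)
  rw [hueq]
  refine ⟨hpref, fun h => ?_⟩
  rw [h] at hlen
  exact lt_irrefl _ hlen
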